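/- Let (Ω, 𝒜) be a measurable space, μ a probability measure on Ω, d a natural number, and X : Ω → (Fin d → ℝ) a measurable function that is bounded, i.e. there exists C ∈ ℝ such that |X ω j| ≤ C for all ω ∈ Ω and j : Fin d. Then the (componentwise Bochner) integral ∫ X ∂μ belongs to convexHull ℝ (Set.range X). -/

import Mathlib

open MeasureTheory

/-- Supporting hyperplane: if `b` is in the closure of a convex set `K` but not in `K`
(in a finite-dimensional space), there is a linear functional `f` with `f ≤ f b` on `K`
and `f x < f b` for some `x ∈ K`. -/
lemma sep_lemma {E : Type*} [NormedAddCommGroup E] [NormedSpace ℝ E] [FiniteDimensional ℝ E]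
    {K : Set E} (hK : Convex ℝ K) {b : E} (hb : b ∈ closure K) (hbK : b ∉ K) :
    ∃ f : E →ₗ[ℝ] ℝ, (∀ x ∈ K, f x ≤ f b) ∧ (∃ x ∈ K, f x < f b) := by
  have hKne : K.Nonempty := closure_nonempty_iff.mp ⟨b, hb⟩
  have hbA : b ∈ affineSpan ℝ K := by
    have hcl : IsClosed ((affineSpan ℝ K : Set E)) :=
      (affineSpan ℝ K).closed_of_finiteDimensional
    exact hcl.closure_subset_iff.mpr (subset_affineSpan ℝ K) hb
  set V := (affineSpan ℝ K).direction with hV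
  have hmem : ∀ x ∈ K, x - b ∈ V := fun x hx => by
    simpa [vsub_eq_sub] using
      AffineSubspace.vsub_mem_direction (subset_affineSpan ℝ K hx) hbA
  set K' : Set V := (fun x : V => (x : E) + b) ⁻¹' K with hK'def
  have hmemK' : ∀ x (hx : x ∈ K), (⟨x - b, hmem x hx⟩ : V) ∈ K' := by
    intro x hx
    simp only [hK'def, Set.mem_preimage, sub_add_cancel]
    exact hx
  have hK'conv : Convex ℝ K' := by
    intro x hx y hy a c ha hc hac
    simp only [hK'def, Set.mem_preimage] at hx hy ⊢
    have h2 : ((a • x + c • y : V) : E) + b = a • ((x : E) + b) + c • ((y : E) + b) := by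
      simp only [Submodule.coe_add, Submodule.coe_smul]
      rw [smul_add, smul_add]
      rw [show a • (x : E) + a • b + (c • (y : E) + c • b)
          = a • (x : E) + c • (y : E) + (a + c) • b by rw [add_smul]; abel, hac, one_smul]
    rw [h2]
    exact hK hx hy ha hc hac
  -- the vector span of `K'` is everything
  have hvs : vectorSpan ℝ K' = ⊤ := by
    apply Submodule.map_injective_of_injective V.injective_subtype
    rw [Submodule.map_top, Submodule.range_subtype, vectorSpan_def, Submodule.map_span]
    have himg : (V.subtype '' (K' -ᵥ K')) = K -ᵥ K := by
      ext v
      simp only [Set.mem_image, Set.mem_vsub]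
      constructor
      · rintro ⟨u, ⟨p, hp, q, hq, rfl⟩, rfl⟩
        simp only [hK'def, Set.mem_preimage] at hp hq
        refine ⟨(p : E) + b, hp, (q : E) + b, hq, ?_⟩
        simp [vsub_eq_sub]
      · rintro ⟨x, hx, y, hy, rfl⟩
        refine ⟨(⟨x - b, hmem x hx⟩ : V) -ᵥ (⟨y - b, hmem y hy⟩ : V),
          ⟨(⟨x - b, hmem x hx⟩ : V), hmemK' x hx, (⟨y - b, hmem y hy⟩ : V), hmemK' y hy, rfl⟩, ?_⟩
        show (x - b) - (y - b) = x -ᵥ y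
        simp [vsub_eq_sub]
    rw [himg, ← vectorSpan_def, ← direction_affineSpan]
  have hK'ne : K'.Nonempty := by
    obtain ⟨p0, hp0⟩ := hKne
    exact ⟨_, hmemK' p0 hp0⟩
  have haff : affineSpan ℝ K' = ⊤ :=
    (AffineSubspace.affineSpan_eq_top_iff_vectorSpan_eq_top_of_nonempty ℝ _ _ hK'ne).mpr hvs
  have hint : (interior K').Nonempty :=
    hK'conv.interior_nonempty_iff_affineSpan_eq_top.mpr haff
  have h0 : (0 : V) ∉ interior K' := by
    intro h
    exact hbK (by simpa [hK'def] using interior_subset h)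
  obtain ⟨f, hf⟩ := geometric_hahn_banach_open_point hK'conv.interior isOpen_interior h0
  obtain ⟨x0, hx0⟩ := hint
  have hx0lt : f x0 < 0 := by simpa using hf x0 hx0
  -- f ≤ 0 on K'
  have hfle : ∀ x ∈ K', f x ≤ 0 := by
    intro x hx
    by_contra hpos
    push_neg at hpos
    set t : ℝ := f x / (2 * (f x - f x0)) with ht
    have hd : 0 < f x - f x0 := by linarith
    have ht0 : 0 < t := by positivity
    have ht1 : t < 1 := by
      rw [ht, div_lt_one (by positivity)]
      linarith
    have hmem2 : (1 - t) • x + t • x0 ∈ interior K' :=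
      hK'conv.combo_self_interior_mem_interior hx hx0 (by linarith) ht0 (by ring)
    have hlt := hf _ hmem2
    rw [map_zero, map_add, f.map_smul, f.map_smul] at hlt
    have hteq : t * (f x - f x0) = f x / 2 := by
      rw [ht]; field_simp
    have : (1 - t) * f x + t * f x0 = f x - t * (f x - f x0) := by ring
    simp only [smul_eq_mul] at hlt
    rw [this, hteq] at hlt
    linarith
  -- extend to E
  obtain ⟨g, hg⟩ := LinearMap.exists_extend ((f : V →ₗ[ℝ] ℝ))
  have hgval : ∀ v : V, g (v : E) = f v := by
    intro v
    have := congrFun (congrArg DFunLike.coe hg) v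
    simpa using this
  refine ⟨g, ?_, ?_⟩
  · intro x hx
    have h1 : g (x - b) = g x - g b := map_sub g x b
    have h2 : g (x - b) = f ⟨x - b, hmem x hx⟩ := hgval ⟨x - b, hmem x hx⟩
    have h3 : f ⟨x - b, hmem x hx⟩ ≤ 0 := hfle _ (hmemK' x hx)
    linarith
  · refine ⟨(x0 : E) + b, by simpa [hK'def] using interior_subset hx0, ?_⟩
    have h1 : g ((x0 : E) + b) = g (x0 : E) + g b := map_add g _ _
    have h2 : g (x0 : E) = f x0 := hgval x0
    linarith

lemma main_aux {Ω : Type*} [MeasurableSpace Ω] (μ : Measure Ω) [IsProbabilityMeasure μ]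
    (d : ℕ) (X : Ω → (Fin d → ℝ)) (hX : Measurable X) (C : ℝ)
    (hC : ∀ (ω : Ω) (j : Fin d), |X ω j| ≤ C) :
    ∀ (n : ℕ) (s : Set Ω), MeasurableSet s → μ s = 1 →
      Module.finrank ℝ
        (Submodule.span ℝ ((fun x => x - ∫ ω, X ω ∂μ) '' (X '' s))) ≤ n →
      (∫ ω, X ω ∂μ) ∈ convexHull ℝ (X '' s) := by
  have hint : Integrable X μ := by
    refine ⟨hX.aestronglyMeasurable, ?_⟩
    apply HasFiniteIntegral.of_bounded (C := |C|)
    filter_upwards with ω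
    rw [pi_norm_le_iff_of_nonneg (abs_nonneg C)]
    intro j
    rw [Real.norm_eq_abs]
    exact (hC ω j).trans (le_abs_self C)
  set b := ∫ ω, X ω ∂μ with hbdef
  intro n
  induction n with
  | zero =>
    intro s hs hμs hdim
    have hbot : Submodule.span ℝ ((fun x => x - b) '' (X '' s)) = ⊥ :=
      Submodule.finrank_eq_zero.mp (Nat.le_zero.mp hdim)
    have hsne : s.Nonempty := by
      rcases Set.eq_empty_or_nonempty s with h | h
      · exfalso; rw [h, measure_empty] at hμs; exact one_ne_zero hμs.symm
      · exact h
    obtain ⟨ω0, hω0⟩ := hsne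
    have hm : X ω0 - b ∈ Submodule.span ℝ ((fun x => x - b) '' (X '' s)) :=
      Submodule.subset_span ⟨X ω0, ⟨ω0, hω0, rfl⟩, rfl⟩
    rw [hbot, Submodule.mem_bot, sub_eq_zero] at hm
    rw [← hm]
    exact subset_convexHull ℝ _ ⟨ω0, hω0, rfl⟩
  | succ m ih =>
    intro s hs hμs hdim
    have hcompl : μ sᶜ = 0 := (prob_compl_eq_zero_iff hs).mpr hμs
    have hsae : ∀ᵐ ω ∂μ, ω ∈ s := by
      rw [ae_iff]
      convert hcompl using 2
      rfl
    set K := convexHull ℝ (X '' s) with hKdef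
    have hbcl : b ∈ closure K := by
      refine (convex_convexHull ℝ _).closure.integral_mem isClosed_closure ?_ hint
      filter_upwards [hsae] with ω hω
      exact subset_closure (subset_convexHull ℝ _ ⟨ω, hω, rfl⟩)
    by_cases hbK : b ∈ K
    · exact hbK
    obtain ⟨f, hfle, x1, hx1K, hx1lt⟩ := sep_lemma (convex_convexHull ℝ _) hbcl hbK
    set F := LinearMap.toContinuousLinearMap f with hFdef
    have hFf : ∀ x, F x = f x := fun x => rfl
    have hFX_int : Integrable (fun ω => F (X ω)) μ := F.integrable_comp hint
    have hFb : ∫ ω, F (X ω) ∂μ = F b := F.integral_comp_comm hint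
    have hle_ae : ∀ᵐ ω ∂μ, F (X ω) ≤ F b := by
      filter_upwards [hsae] with ω hω
      exact hfle _ (subset_convexHull ℝ _ ⟨ω, hω, rfl⟩)
    have hzero : (fun ω => F b - F (X ω)) =ᵐ[μ] 0 := by
      have hi : Integrable (fun ω => F b - F (X ω)) μ := (integrable_const (F b)).sub hFX_int
      have hnn : 0 ≤ᵐ[μ] (fun ω => F b - F (X ω)) := by
        filter_upwards [hle_ae] with ω h
        simp only [Pi.zero_apply]
        linarith
      refine (integral_eq_zero_iff_of_nonneg_ae hnn hi).mp ?_
      rw [integral_sub (integrable_const _) hFX_int, integral_const, probReal_univ,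
        one_smul, hFb, sub_self]
    have heq_ae : ∀ᵐ ω ∂μ, F (X ω) = F b := by
      filter_upwards [hzero] with ω h
      have : F b - F (X ω) = 0 := h
      linarith
    set s' := s ∩ {ω | F (X ω) = F b} with hs'def
    have hs'meas : MeasurableSet s' := by
      refine hs.inter ?_
      exact (F.continuous.measurable.comp hX) (measurableSet_singleton (F b))
    have hμs' : μ s' = 1 := by
      rw [← prob_compl_eq_zero_iff hs'meas]
      have hsub : s'ᶜ ⊆ sᶜ ∪ {ω | ¬ F (X ω) = F b} := by
        rw [hs'def, Set.compl_inter]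
        apply Set.union_subset_union_right
        intro ω hω
        exact hω
      refine measure_mono_null hsub (measure_union_null hcompl ?_)
      exact ae_iff.mp heq_ae
    -- dimension decreases
    set Wold := Submodule.span ℝ ((fun x => x - b) '' (X '' s)) with hWold
    set Wnew := Submodule.span ℝ ((fun x => x - b) '' (X '' s')) with hWnew
    have key1 : Wnew ≤ Wold ⊓ LinearMap.ker f := by
      rw [hWnew, Submodule.span_le]
      rintro _ ⟨_, ⟨ω, hω, rfl⟩, rfl⟩
      refine Submodule.mem_inf.mpr ⟨?_, ?_⟩
      · exact Submodule.subset_span ⟨X ω, ⟨ω, hω.1, rfl⟩, rfl⟩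
      · have hωeq : F (X ω) = F b := hω.2
        rw [LinearMap.mem_ker, map_sub]
        rw [← hFf, ← hFf, hωeq, sub_self]
    have hWconv : Convex ℝ {x : Fin d → ℝ | x - b ∈ Wold} := by
      intro x hx y hy a c ha hc hac
      simp only [Set.mem_setOf_eq] at hx hy ⊢
      have h2 : a • (x - b) + c • (y - b) = a • x + c • y - (a + c) • b := by
        rw [smul_sub, smul_sub, add_smul]; abel
      rw [hac, one_smul] at h2
      rw [← h2]
      exact Submodule.add_mem _ (Submodule.smul_mem _ _ hx) (Submodule.smul_mem _ _ hy)
    have key2 : Wold ⊓ LinearMap.ker f < Wold := by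
      refine lt_of_le_of_ne inf_le_left ?_
      intro hEq
      have hker : Wold ≤ LinearMap.ker f := hEq ▸ inf_le_right
      have hsub : K ⊆ {x | x - b ∈ Wold} :=
        convexHull_min (fun x hx => Submodule.subset_span ⟨x, hx, rfl⟩) hWconv
      have hx1span : x1 - b ∈ Wold := hsub hx1K
      have : f (x1 - b) = 0 := hker hx1span
      rw [map_sub, sub_eq_zero] at this
      exact absurd this (ne_of_lt hx1lt)
    have hdim' : Module.finrank ℝ Wnew ≤ m := by
      have h1 : Module.finrank ℝ Wnew ≤ Module.finrank ℝ (Wold ⊓ LinearMap.ker f : Submodule ℝ _) :=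
        Submodule.finrank_mono key1
      have h2 : Module.finrank ℝ (Wold ⊓ LinearMap.ker f : Submodule ℝ _)
          < Module.finrank ℝ Wold :=
        Submodule.finrank_lt_finrank_of_lt key2
      omega
    have := ih s' hs'meas hμs' hdim'
    exact convexHull_mono (Set.image_mono Set.inter_subset_left) this

theorem stmt2 {Ω : Type*} [MeasurableSpace Ω] (μ : Measure Ω) [IsProbabilityMeasure μ]
    (d : ℕ) (X : Ω → (Fin d → ℝ)) (hX : Measurable X)
    (hbd : ∃ C : ℝ, ∀ (ω : Ω) (j : Fin d), |X ω j| ≤ C) :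
    (∫ ω, X ω ∂μ) ∈ convexHull ℝ (Set.range X) := by
  obtain ⟨C, hC⟩ := hbd
  have := main_aux μ d X hX C hC
    (Module.finrank ℝ
      (Submodule.span ℝ ((fun x => x - ∫ ω, X ω ∂μ) '' (X '' Set.univ))))
    Set.univ MeasurableSet.univ (by simp) le_rfl
  rwa [Set.image_univ] at this
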